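/- Let A = σuv* + E with ε = ‖E‖_C/(σ‖u‖_∞‖v‖_∞) ≤ 1/8. Suppose a_{ij} is simultaneously a maximal-in-modulus element of its row i and its column j of A. Set μ_u = |u_i|/‖u‖_∞ and μ_v = |v_j|/‖v‖_∞. Then either both μ_u ≤ μ₁ and μ_v ≤ μ₁, or both μ_u ≥ μ₂ and μ_v ≥ μ₂, where μ₁ = (1-sqrt(1-8ε))/2, μ₂ = (1+sqrt(1-8ε))/2. -/

import Mathlib

private lemma maxvol_quad_aux (μu μv ε s : ℝ)
    (h1 : μv * (1 - μu) ≤ 2 * ε) (h2 : μu * (1 - μv) ≤ 2 * ε)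
    (hμu0 : 0 ≤ μu) (hμv0 : 0 ≤ μv) (hμu1 : μu ≤ 1) (hμv1 : μv ≤ 1)
    (hs0 : 0 ≤ s) (hs2 : s ^ 2 = 1 - 8 * ε) :
    (μu ≤ (1 - s) / 2 ∧ μv ≤ (1 - s) / 2) ∨
    ((1 + s) / 2 ≤ μu ∧ (1 + s) / 2 ≤ μv) := by
  rcases le_total μu μv with h | h
  · have hb' : μv * (1 - μv) ≤ 2 * ε := by nlinarith
    by_cases hc : μv ≤ (1 - s) / 2
    · exact Or.inl ⟨le_trans h hc, hc⟩
    · push_neg at hc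
      have hquad : 0 ≤ (μv - (1 - s) / 2) * (μv - (1 + s) / 2) := by nlinarith
      have hv2 : (1 + s) / 2 ≤ μv := by
        by_contra hlt
        push_neg at hlt
        nlinarith
      have hu2 : (1 + s) / 2 ≤ μu := by
        nlinarith [mul_le_mul_of_nonneg_right hv2 (show 0 ≤ 1 - μu by linarith)]
      exact Or.inr ⟨hu2, hv2⟩
  · have hb' : μu * (1 - μu) ≤ 2 * ε := by nlinarith
    by_cases hc : μu ≤ (1 - s) / 2
    · exact Or.inl ⟨hc, le_trans h hc⟩
    · push_neg at hc
      have hquad : 0 ≤ (μu - (1 - s) / 2) * (μu - (1 + s) / 2) := by nlinarith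
      have hu2 : (1 + s) / 2 ≤ μu := by
        by_contra hlt
        push_neg at hlt
        nlinarith
      have hv2 : (1 + s) / 2 ≤ μv := by
        nlinarith [mul_le_mul_of_nonneg_right hu2 (show 0 ≤ 1 - μv by linarith)]
      exact Or.inr ⟨hu2, hv2⟩

/-- Stopping points of the rank-1 maxvol algorithm: if `A = σuv* + E` with
`ε = ‖E‖_C/(σ‖u‖_∞‖v‖_∞) ≤ 1/8` and `a_{ij}` is maximal in modulus both in its row `i`
and its column `j`, then setting `μ_u = |u_i|/‖u‖_∞` and `μ_v = |v_j|/‖v‖_∞`, either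
both `μ_u, μ_v ≤ μ₁` or both `μ_u, μ_v ≥ μ₂`. -/
theorem maxvol_stop_dichotomy {m n : ℕ} [NeZero m] [NeZero n]
    (σ : ℝ) (hσ : 0 < σ)
    (u : Fin m → ℂ) (v : Fin n → ℂ)
    (hu : ∑ i, ‖u i‖ ^ 2 = 1) (hv : ∑ j, ‖v j‖ ^ 2 = 1)
    (A E : Matrix (Fin m) (Fin n) ℂ)
    (hA : ∀ i j, A i j = σ * u i * (starRingEnd ℂ) (v j) + E i j)
    (δ : ℝ) (hδ : δ = ⨆ p : Fin m × Fin n, ‖E p.1 p.2‖)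
    (ε : ℝ)
    (hε : ε = δ / (σ * (⨆ i, ‖u i‖) * (⨆ j, ‖v j‖)))
    (hε8 : ε ≤ 1 / 8)
    (i : Fin m) (j : Fin n)
    (hmaxcol : ∀ i', ‖A i' j‖ ≤ ‖A i j‖)
    (hmaxrow : ∀ j', ‖A i j'‖ ≤ ‖A i j‖)
    (μu μv : ℝ)
    (hμu : μu = ‖u i‖ / (⨆ i, ‖u i‖))
    (hμv : μv = ‖v j‖ / (⨆ j, ‖v j‖)) :
    (μu ≤ (1 - Real.sqrt (1 - 8 * ε)) / 2 ∧ μv ≤ (1 - Real.sqrt (1 - 8 * ε)) / 2) ∨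
    ((1 + Real.sqrt (1 - 8 * ε)) / 2 ≤ μu ∧ (1 + Real.sqrt (1 - 8 * ε)) / 2 ≤ μv) := by
  set U := ⨆ i, ‖u i‖ with hUdef
  set V := ⨆ j, ‖v j‖ with hVdef
  -- maximizers
  obtain ⟨i0, hi0⟩ := Finite.exists_max (fun i => ‖u i‖)
  obtain ⟨j0, hj0⟩ := Finite.exists_max (fun j => ‖v j‖)
  have hbu : BddAbove (Set.range fun i => ‖u i‖) :=
    (Set.finite_range _).bddAbove
  have hbv : BddAbove (Set.range fun j => ‖v j‖) :=
    (Set.finite_range _).bddAbove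
  have hU : U = ‖u i0‖ :=
    le_antisymm (ciSup_le hi0) (le_ciSup hbu i0)
  have hV : V = ‖v j0‖ :=
    le_antisymm (ciSup_le hj0) (le_ciSup hbv j0)
  have hUle : ∀ i', ‖u i'‖ ≤ U := fun i' => le_ciSup hbu i'
  have hVle : ∀ j', ‖v j'‖ ≤ V := fun j' => le_ciSup hbv j'
  -- positivity of U, V
  have hUpos : 0 < U := by
    rcases lt_or_ge 0 U with h | h
    · exact h
    · exfalso
      have hz : ∀ i', ‖u i'‖ = 0 := fun i' =>
        le_antisymm (le_trans (hUle i') h) (norm_nonneg _)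
      simp [hz] at hu
  have hVpos : 0 < V := by
    rcases lt_or_ge 0 V with h | h
    · exact h
    · exfalso
      have hz : ∀ j', ‖v j'‖ = 0 := fun j' =>
        le_antisymm (le_trans (hVle j') h) (norm_nonneg _)
      simp [hz] at hv
  -- error bound
  have hEδ : ∀ i' j', ‖E i' j'‖ ≤ δ := by
    intro i' j'
    rw [hδ]
    exact le_ciSup (f := fun p : Fin m × Fin n => ‖E p.1 p.2‖)
      ((Set.finite_range _).bddAbove) (⟨i', j'⟩ : Fin m × Fin n)
  have hδ0 : 0 ≤ δ := le_trans (norm_nonneg (E i j)) (hEδ i j)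
  -- abs of the rank-1 term
  have habs1 : ∀ i' j', ‖(σ : ℂ) * u i' * (starRingEnd ℂ) (v j')‖ =
      σ * ‖u i'‖ * ‖v j'‖ := by
    intro i' j'
    simp [map_mul, Complex.norm_real, Complex.norm_conj, abs_of_pos hσ]
  -- upper bound on |A i' j'|
  have habs_le : ∀ i' j', ‖A i' j'‖ ≤
      σ * ‖u i'‖ * ‖v j'‖ + δ := by
    intro i' j'
    rw [hA]
    refine le_trans (norm_add_le _ _) ?_
    rw [habs1]
    exact add_le_add_right (hEδ i' j') _
  -- lower bound on |A i' j'|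
  have habs_ge : ∀ i' j', σ * ‖u i'‖ * ‖v j'‖ - δ ≤
      ‖A i' j'‖ := by
    intro i' j'
    have h := norm_add_le (A i' j') (-(E i' j'))
    have h2 : A i' j' + -(E i' j') = (σ : ℂ) * u i' * (starRingEnd ℂ) (v j') := by
      rw [hA]; ring
    rw [h2, habs1, norm_neg] at h
    linarith [hEδ i' j']
  set a := ‖u i‖ with hadef
  set b := ‖v j‖ with hbdef
  have ha0 : 0 ≤ a := norm_nonneg _
  have hb0 : 0 ≤ b := norm_nonneg _
  have haU : a ≤ U := hUle i
  have hbV : b ≤ V := hVle j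
  -- key inequalities
  have key1 : σ * b * (U - a) ≤ 2 * δ := by
    have h1 := habs_ge i0 j
    have h2 := habs_le i j
    have h3 := hmaxcol i0
    rw [← hU] at h1
    nlinarith
  have key2 : σ * a * (V - b) ≤ 2 * δ := by
    have h1 := habs_ge i j0
    have h2 := habs_le i j
    have h3 : ‖A i j0‖ ≤ ‖A i j‖ := hmaxrow j0
    rw [← hV] at h1
    nlinarith
  -- normalized inequalities
  have hσUV : 0 < σ * U * V := by positivity
  have hε0 : 0 ≤ ε := by rw [hε]; positivity
  have h1 : μv * (1 - μu) ≤ 2 * ε := by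
    rw [hμu, hμv, hε]
    rw [show b / V * (1 - a / U) = (σ * b * (U - a)) / (σ * U * V) by
      field_simp]
    rw [show 2 * (δ / (σ * U * V)) = (2 * δ) / (σ * U * V) by ring]
    exact div_le_div_of_nonneg_right key1 hσUV.le
  have h2 : μu * (1 - μv) ≤ 2 * ε := by
    rw [hμu, hμv, hε]
    rw [show a / U * (1 - b / V) = (σ * a * (V - b)) / (σ * U * V) by
      field_simp]
    rw [show 2 * (δ / (σ * U * V)) = (2 * δ) / (σ * U * V) by ring]
    exact div_le_div_of_nonneg_right key2 hσUV.le
  have hμu0 : 0 ≤ μu := by rw [hμu]; positivity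
  have hμv0 : 0 ≤ μv := by rw [hμv]; positivity
  have hμu1 : μu ≤ 1 := by rw [hμu]; exact div_le_one_of_le₀ haU (le_of_lt hUpos)
  have hμv1 : μv ≤ 1 := by rw [hμv]; exact div_le_one_of_le₀ hbV (le_of_lt hVpos)
  exact maxvol_quad_aux μu μv ε (Real.sqrt (1 - 8 * ε)) h1 h2 hμu0 hμv0 hμu1 hμv1
    (Real.sqrt_nonneg _) (Real.sq_sqrt (by linarith))
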